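/- For every integer N ≥ 1, the quotient group Γ / Z^{N+1}(Γ) is isomorphic to the semidirect product ℤ ⋉ (A/(u−1)^N A), where m ∈ ℤ acts on the quotient ring A/(u−1)^N A by multiplication by the class of u^m. -/

import Mathlib

open LaurentPolynomial
open scoped commutatorElement

lemma zph {R : Type*} [Ring R] (v : Rˣ) (m : ℤ) (p : R) :
    ((AddEquiv.toMultiplicative (AddAut.mulLeft v)) ^ m) (Multiplicative.ofAdd p)
      = Multiplicative.ofAdd ((↑(v ^ m) : R) * p) := by
  have base : ∀ q : R, (AddEquiv.toMultiplicative (AddAut.mulLeft v)) (Multiplicative.ofAdd q)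
      = Multiplicative.ofAdd ((v : R) * q) := fun q => rfl
  have binv : ∀ q : R, (AddEquiv.toMultiplicative (AddAut.mulLeft v))⁻¹ (Multiplicative.ofAdd q)
      = Multiplicative.ofAdd ((↑v⁻¹ : R) * q) := by
    intro q
    apply (AddEquiv.toMultiplicative (AddAut.mulLeft v)).injective
    rw [MulAut.apply_inv_self, base, ← mul_assoc, Units.mul_inv, one_mul]
  induction m using Int.induction_on generalizing p with
  | zero => simp
  | succ k ih =>
    rw [zpow_add_one, MulAut.mul_apply, base, ih, zpow_add_one, Units.val_mul, mul_assoc]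
  | pred k ih =>
    rw [zpow_sub_one, MulAut.mul_apply, binv, ih, zpow_sub_one, Units.val_mul, mul_assoc]

lemma unitT_val (m : ℤ) :
    (((isUnit_T (R := ℤ) 1).unit ^ m : (LaurentPolynomial ℤ)ˣ) : LaurentPolynomial ℤ) = T m := by
  have h1 : ((isUnit_T (R := ℤ) 1).unit : LaurentPolynomial ℤ) = T 1 := (isUnit_T 1).unit_spec
  have hinv : (((isUnit_T (R := ℤ) 1).unit⁻¹ : (LaurentPolynomial ℤ)ˣ) : LaurentPolynomial ℤ)
      = T (-1) := by
    apply Units.inv_eq_of_mul_eq_one_right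
    rw [h1, ← T_add]
    norm_num
  induction m using Int.induction_on with
  | zero => simp
  | succ k ih => rw [zpow_add_one, Units.val_mul, ih, h1, ← T_add]
  | pred k ih => rw [zpow_sub_one, Units.val_mul, ih, hinv, ← T_add, sub_eq_add_neg]

/-- The automorphism of (the multiplicative version of) the additive group
`A = ℤ[u,u⁻¹]` given by multiplication by `u` (i.e. by `T 1`). -/
noncomputable def sigma : MulAut (Multiplicative (LaurentPolynomial ℤ)) :=
  AddEquiv.toMultiplicative (AddAut.mulLeft (isUnit_T (R := ℤ) 1).unit)

/-- The action of `ℤ` on `A = ℤ[u,u⁻¹]`: `m` acts by multiplication by `u^m`. -/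
noncomputable def phi : Multiplicative ℤ →* MulAut (Multiplicative (LaurentPolynomial ℤ)) :=
  zpowersHom _ sigma

/-- The semidirect product `Γ = ℤ ⋉ A`, where `m ∈ ℤ` acts on `A = ℤ[u,u⁻¹]` by
multiplication by `u^m`. An element `(m, p)` is `⟨Multiplicative.ofAdd p, Multiplicative.ofAdd m⟩`. -/
abbrev Gamma := SemidirectProduct (Multiplicative (LaurentPolynomial ℤ)) (Multiplicative ℤ) phi

/-- The quotient ring `A/(u-1)^N A`. -/
abbrev Rq (N : ℕ) := LaurentPolynomial ℤ ⧸ Ideal.span {((T 1 : LaurentPolynomial ℤ) - 1) ^ N}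

/-- The automorphism of (the multiplicative version of) the additive group `A/(u-1)^N A`
given by multiplication by the class of `u`. -/
noncomputable def sigmaQ (N : ℕ) : MulAut (Multiplicative (Rq N)) :=
  AddEquiv.toMultiplicative
    (AddAut.mulLeft ((isUnit_T (R := ℤ) 1).map
      (Ideal.Quotient.mk (Ideal.span {((T 1 : LaurentPolynomial ℤ) - 1) ^ N}))).unit)

/-- The semidirect product `ℤ ⋉ (A/(u-1)^N A)`, where `m ∈ ℤ` acts by multiplication
by the class of `u^m`. -/
abbrev GammaQ (N : ℕ) :=
  SemidirectProduct (Multiplicative (Rq N)) (Multiplicative ℤ) (zpowersHom _ (sigmaQ N))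

noncomputable abbrev Ik (N : ℕ) : Ideal (LaurentPolynomial ℤ) :=
  Ideal.span {((T 1 : LaurentPolynomial ℤ) - 1) ^ N}

lemma phi_apply (m : ℤ) (p : LaurentPolynomial ℤ) :
    phi (Multiplicative.ofAdd m) (Multiplicative.ofAdd p)
      = Multiplicative.ofAdd (T m * p) := by
  rw [phi, zpowersHom_apply, toAdd_ofAdd, sigma, zph, unitT_val]

lemma phiQ_apply (N : ℕ) (m : ℤ) (p : Rq N) :
    (zpowersHom _ (sigmaQ N)) (Multiplicative.ofAdd m) (Multiplicative.ofAdd p)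
      = Multiplicative.ofAdd (Ideal.Quotient.mk (Ik N) (T m) * p) := by
  rw [zpowersHom_apply, toAdd_ofAdd, sigmaQ, zph]
  congr 1
  have : ((isUnit_T (R := ℤ) 1).map (Ideal.Quotient.mk (Ik N))).unit
      = Units.map (Ideal.Quotient.mk (Ik N) : LaurentPolynomial ℤ →* Rq N)
        (isUnit_T (R := ℤ) 1).unit := by
    ext
    simp
  rw [this, ← map_zpow, Units.coe_map]
  simp [unitT_val]

lemma comm_formula (p q : LaurentPolynomial ℤ) (m n : ℤ) :
    ⁅(⟨Multiplicative.ofAdd p, Multiplicative.ofAdd m⟩ : Gamma),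
     (⟨Multiplicative.ofAdd q, Multiplicative.ofAdd n⟩ : Gamma)⁆
      = ⟨Multiplicative.ofAdd ((1 - T n) * p + (T m - 1) * q), 1⟩ := by
  rw [commutatorElement_def]
  ext
  · simp only [SemidirectProduct.mul_left, SemidirectProduct.inv_left,
      SemidirectProduct.mul_right, SemidirectProduct.inv_right, ← ofAdd_neg, ← ofAdd_add,
      phi_apply, map_mul, map_inv]
    congr 1
    rw [T_add, show (m + n + -m) = n by ring]
    ring_nf
    simp only [mul_T_assoc]
    norm_num
  · simp [SemidirectProduct.mul_right, SemidirectProduct.inv_right, ← ofAdd_neg, ← ofAdd_add]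

lemma T_sub_one_dvd (n : ℤ) : ((T 1 : LaurentPolynomial ℤ) - 1) ∣ (T n - 1) := by
  induction n using Int.induction_on with
  | zero => simp
  | succ k ih =>
    have h : (T ((k : ℤ) + 1) - 1 : LaurentPolynomial ℤ)
        = T k * (T 1 - 1) + (T k - 1) := by rw [T_add]; ring
    rw [h]
    exact dvd_add (Dvd.intro_left _ rfl) ih
  | pred k ih =>
    have h1 : (T (-1) : LaurentPolynomial ℤ) * T 1 = 1 := by rw [← T_add]; norm_num
    have h : (T (-(k : ℤ) - 1) - 1 : LaurentPolynomial ℤ)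
        = (T (-(k : ℤ)) - 1) * T (-1) + (-(T (-1))) * (T 1 - 1) := by
      rw [show (-(k : ℤ) - 1) = -(k : ℤ) + -1 by ring, T_add]
      linear_combination h1
    rw [h]
    exact dvd_add (Dvd.dvd.mul_right ih _) (Dvd.intro_left _ rfl)

lemma one_sub_T_dvd (n : ℤ) : ((T 1 : LaurentPolynomial ℤ) - 1) ∣ (1 - T n) := by
  have h := dvd_neg.2 (T_sub_one_dvd n)
  rwa [neg_sub] at h

noncomputable def fmap (N : ℕ) : Gamma →* GammaQ N :=
  SemidirectProduct.map
    (AddMonoidHom.toMultiplicative ((Ideal.Quotient.mk (Ik N)).toAddMonoidHom))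
    (MonoidHom.id _)
    (by
      intro g
      refine MonoidHom.ext fun x => ?_
      show Multiplicative.ofAdd (Ideal.Quotient.mk (Ik N) ((phi g x).toAdd)) = _
      have h1 : phi g x = Multiplicative.ofAdd (T g.toAdd * x.toAdd) := phi_apply _ _
      have h2 := phiQ_apply N g.toAdd (Ideal.Quotient.mk (Ik N) x.toAdd)
      simp only [h1, toAdd_ofAdd, map_mul]
      exact h2.symm)

lemma mem_ker_fmap (N : ℕ) (x : Gamma) :
    x ∈ (fmap N).ker ↔ x.left.toAdd ∈ Ik N ∧ x.right = 1 := by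
  rw [MonoidHom.mem_ker, SemidirectProduct.ext_iff]
  constructor
  · rintro ⟨h1, h2⟩
    refine ⟨?_, h2⟩
    rw [← Ideal.Quotient.eq_zero_iff_mem (I := Ik N)]
    exact congrArg Multiplicative.toAdd h1
  · rintro ⟨h1, h2⟩
    constructor
    · show Multiplicative.ofAdd (Ideal.Quotient.mk (Ik N) x.left.toAdd) = 1
      rw [Ideal.Quotient.eq_zero_iff_mem.2 h1]; rfl
    · exact h2

lemma eq_comm_helper (k : ℕ) (c : LaurentPolynomial ℤ) (x : Gamma)
    (h1 : x.left.toAdd = ((T 1 : LaurentPolynomial ℤ) - 1) ^ (k + 1) * c)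
    (h2 : x.right = 1) :
    x = ⁅(⟨Multiplicative.ofAdd (-(((T 1 : LaurentPolynomial ℤ) - 1) ^ k * c)),
            Multiplicative.ofAdd 0⟩ : Gamma),
         (⟨Multiplicative.ofAdd 0, Multiplicative.ofAdd 1⟩ : Gamma)⁆ := by
  rw [comm_formula]
  refine SemidirectProduct.ext ?_ ?_
  · show x.left = Multiplicative.ofAdd _
    have : x.left = Multiplicative.ofAdd x.left.toAdd := rfl
    rw [this, h1]
    congr 1
    rw [T_zero]
    ring
  · exact h2

lemma lcs_eq (k : ℕ) : Subgroup.lowerCentralSeries (⊤ : Subgroup Gamma) (k + 1) = (fmap (k + 1)).ker := by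
  have e : ∀ n, Subgroup.lowerCentralSeries (⊤ : Subgroup Gamma) (n + 1) = ⁅Subgroup.lowerCentralSeries (⊤ : Subgroup Gamma) n, ⊤⁆ :=
    fun n => rfl
  induction k with
  | zero =>
    rw [e, lowerCentralSeries_zero]
    apply le_antisymm
    · rw [Subgroup.commutator_le]
      intro g _ h _
      have hc : ⁅g, h⁆ = (⟨Multiplicative.ofAdd
            ((1 - T h.right.toAdd) * g.left.toAdd + (T g.right.toAdd - 1) * h.left.toAdd),
            1⟩ : Gamma) :=
        comm_formula g.left.toAdd h.left.toAdd g.right.toAdd h.right.toAdd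
      rw [mem_ker_fmap, hc]
      refine ⟨?_, rfl⟩
      show (1 - T h.right.toAdd) * g.left.toAdd + (T g.right.toAdd - 1) * h.left.toAdd ∈ Ik 1
      rw [Ideal.mem_span_singleton, pow_one]
      exact dvd_add ((one_sub_T_dvd _).mul_right _) ((T_sub_one_dvd _).mul_right _)
    · intro x hx
      rw [mem_ker_fmap] at hx
      obtain ⟨hx1, hx2⟩ := hx
      rw [Ideal.mem_span_singleton] at hx1
      obtain ⟨c, hc⟩ := hx1
      rw [eq_comm_helper 0 c x (by rw [hc]) hx2]
      exact Subgroup.commutator_mem_commutator (Subgroup.mem_top _) (Subgroup.mem_top _)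
  | succ k ih =>
    rw [e, ih]
    apply le_antisymm
    · rw [Subgroup.commutator_le]
      intro g hg h _
      rw [mem_ker_fmap] at hg
      obtain ⟨hg1, hg2⟩ := hg
      have hc : ⁅g, h⁆ = (⟨Multiplicative.ofAdd
            ((1 - T h.right.toAdd) * g.left.toAdd + (T g.right.toAdd - 1) * h.left.toAdd),
            1⟩ : Gamma) :=
        comm_formula g.left.toAdd h.left.toAdd g.right.toAdd h.right.toAdd
      rw [mem_ker_fmap, hc]
      refine ⟨?_, rfl⟩
      have hm0 : g.right.toAdd = 0 := congrArg Multiplicative.toAdd hg2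
      show (1 - T h.right.toAdd) * g.left.toAdd + (T g.right.toAdd - 1) * h.left.toAdd
        ∈ Ik (k + 2)
      rw [hm0, T_zero, sub_self, zero_mul, add_zero, Ideal.mem_span_singleton]
      rw [Ideal.mem_span_singleton] at hg1
      rw [pow_succ']
      exact mul_dvd_mul (one_sub_T_dvd _) hg1
    · intro x hx
      rw [mem_ker_fmap] at hx
      obtain ⟨hx1, hx2⟩ := hx
      rw [Ideal.mem_span_singleton] at hx1
      obtain ⟨c, hc⟩ := hx1
      rw [eq_comm_helper (k + 1) c x (by rw [hc]) hx2]
      refine Subgroup.commutator_mem_commutator ?_ (Subgroup.mem_top _)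
      rw [mem_ker_fmap]
      refine ⟨?_, rfl⟩
      show -(((T 1 : LaurentPolynomial ℤ) - 1) ^ (k + 1) * c) ∈ Ik (k + 1)
      rw [Ideal.mem_span_singleton]
      exact (Dvd.intro _ rfl).neg_right

lemma fmap_surjective (N : ℕ) : Function.Surjective (fmap N) := by
  intro y
  obtain ⟨p, hp⟩ := Ideal.Quotient.mk_surjective (I := Ik N) y.left.toAdd
  refine ⟨⟨Multiplicative.ofAdd p, y.right⟩, ?_⟩
  ext
  · show Multiplicative.ofAdd (Ideal.Quotient.mk (Ik N) p) = y.left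
    rw [hp]
    rfl
  · rfl

/-- For `N ≥ 1`, `Γ / Z^{N+1}(Γ)` is isomorphic to `ℤ ⋉ (A/(u-1)^N A)`
(in Mathlib `Z^{N+1}(Γ) = lowerCentralSeries Γ N`). -/
theorem quotient_lowerCentralSeries_iso (N : ℕ) (hN : 1 ≤ N) :
    Nonempty ((Gamma ⧸ Subgroup.lowerCentralSeries (⊤ : Subgroup Gamma) N) ≃* GammaQ N) := by
  obtain ⟨k, rfl⟩ := Nat.exists_eq_add_of_le hN
  have h : Subgroup.lowerCentralSeries (⊤ : Subgroup Gamma) (1 + k) = (fmap (1 + k)).ker := by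
    rw [add_comm] at *
    exact lcs_eq k
  exact ⟨(QuotientGroup.quotientMulEquivOfEq h).trans
    (QuotientGroup.quotientKerEquivOfSurjective (fmap (1 + k)) (fmap_surjective _))⟩
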